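/- For integers n and r with 0 <= r <= n, and all real x: sum_{j=0}^{r} C(n, j) (x-1)^j = sum_{j=0}^{r} (-1)^{r-j} C(n, j) C(n-j-1, r-j) x^j. -/

import Mathlib

theorem truncated_binomial_translate (n r : ℕ) (hr : r ≤ n) (x : ℝ) :
    ∑ j ∈ Finset.range (r + 1), (Nat.choose n j : ℝ) * (x - 1) ^ j =
      ∑ j ∈ Finset.range (r + 1),
        (-1 : ℝ) ^ (r - j) * (Nat.choose n j : ℝ) * (Nat.choose (n - j - 1) (r - j) : ℝ) * x ^ j := by
  induction r with
  | zero => simp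
  | succ r ih =>
    rw [Finset.sum_range_succ, ih (le_of_lt hr), Finset.sum_range_succ (n := r + 1)]
    have hx : (x - 1) ^ (r + 1) =
        ∑ j ∈ Finset.range (r + 1 + 1), x ^ j * (-1 : ℝ) ^ (r + 1 - j) * (Nat.choose (r+1) j : ℝ) := by
      have := add_pow x (-1 : ℝ) (r + 1)
      simpa [sub_eq_add_neg, neg_one_pow_eq_pow_mod_two] using this
    rw [hx, Finset.mul_sum, Finset.sum_range_succ (n := r + 1), ← add_assoc,
      ← Finset.sum_add_distrib]
    congr 1
    · apply Finset.sum_congr rfl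
      intro j hj
      have hjr : j ≤ r := Nat.lt_succ_iff.mp (Finset.mem_range.mp hj)
      have h1 : r + 1 - j = (r - j) + 1 := by omega
      -- trinomial revision: C(n,r+1) C(r+1,j) = C(n,j) C(n-j, r+1-j)
      have key : (Nat.choose n (r+1) : ℝ) * (Nat.choose (r+1) j : ℝ) =
          (Nat.choose n j : ℝ) * (Nat.choose (n - j) (r + 1 - j) : ℝ) := by
        exact_mod_cast congrArg (Nat.cast (R := ℝ)) (Nat.choose_mul (n := n) (k := r+1) (s := j) (by omega))
      -- Pascal: C(n-j, r+1-j) = C(n-j-1, r-j) + C(n-j-1, r+1-j)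
      have pascal : (Nat.choose (n - j) (r + 1 - j) : ℝ) =
          (Nat.choose (n - j - 1) (r - j) : ℝ) + (Nat.choose (n - j - 1) (r + 1 - j) : ℝ) := by
        have hnj : n - j = (n - j - 1) + 1 := by omega
        rw [hnj, h1, Nat.choose_succ_succ]
        push_cast
        ring
      have hsign : (-1 : ℝ) ^ (r + 1 - j) = -(-1 : ℝ) ^ (r - j) := by
        rw [h1, pow_succ]; ring
      rw [hsign, h1] at *
      linear_combination (-(-1:ℝ)^(r-j)*x^j) * key + (-(-1:ℝ)^(r-j)*(Nat.choose n j:ℝ)*x^j) * pascal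
    · have h1 : n - (r+1) - 1 - (r + 1 - (r+1)) = n - (r+1) - 1 := by omega
      simp [Nat.sub_self]
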